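/- Let φ(λ) = λσ₁/(λ-1) + λσ₂ with σ₁, σ₂ > 0, λ₀ = 1 + (σ₁/σ₂)^{1/2} ≥ 20/11, and μ₀ = 11λ₀/10. There exist constants C > 0 and 0 < θ₀ ≪ 1 (independent of σ₁, σ₂) such that for all z ≥ 0 and 0 < θ ≤ θ₀: Im φ(μ₀ + z e^{iθ}) ≥ C z σ₂ θ. -/

import Mathlib

set_option maxHeartbeats 1000000 in
/-- Lower bound on the imaginary part of the holomorphically extended phase
`φ(z) = zσ₁/(z-1) + zσ₂` along the tilted ray from `μ₀ = 11lam0/10`: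
there are `C > 0` and `0 < θ₀ < 1`, independent of `σ₁, σ₂`, with
`Im φ(μ₀ + z e^{iθ}) ≥ C z σ₂ θ` for all `z ≥ 0`, `0 < θ ≤ θ₀`,
whenever `lam0 = 1 + (σ₁/σ₂)^{1/2} ≥ 20/11`. -/
theorem phase_im_lower_bound :
    ∃ C > 0, ∃ θ₀ : ℝ, 0 < θ₀ ∧ θ₀ < 1 ∧
      ∀ σ₁ σ₂ : ℝ, 0 < σ₁ → 0 < σ₂ →
      ∀ Φ : ℂ → ℂ, Φ = (fun w : ℂ => w * σ₁ / (w - 1) + w * σ₂) →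
      ∀ lam0 μ₀ : ℝ, lam0 = 1 + Real.sqrt (σ₁ / σ₂) → 20 / 11 ≤ lam0 →
        μ₀ = 11 * lam0 / 10 →
      ∀ z θ : ℝ, 0 ≤ z → 0 < θ → θ ≤ θ₀ →
        C * z * σ₂ * θ ≤ (Φ ((μ₀ : ℂ) + (z : ℂ) * Complex.exp (Complex.I * (θ : ℂ)))).im := by
  refine ⟨21/242, by norm_num, 1/2, by norm_num, by norm_num, ?_⟩
  intro σ₁ σ₂ hσ₁ hσ₂ Φ hΦ lam0 μ₀ hlam0 hlam0' hμ₀ z θ hz hθ hθ'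
  subst hΦ
  set s := Real.sqrt (σ₁ / σ₂) with hsdef
  have hs0 : 0 ≤ s := Real.sqrt_nonneg _
  have hs2 : s ^ 2 = σ₁ / σ₂ := Real.sq_sqrt (by positivity)
  have hσ₁eq : σ₁ = s ^ 2 * σ₂ := by
    field_simp at hs2; linarith
  have hcos : 0 ≤ Real.cos θ := by
    apply Real.cos_nonneg_of_mem_Icc
    constructor
    · nlinarith [Real.pi_gt_three]
    · nlinarith [Real.pi_gt_three]
  have hsin0 : 0 ≤ Real.sin θ :=
    Real.sin_nonneg_of_nonneg_of_le_pi hθ.le (by nlinarith [Real.pi_gt_three])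
  have hsin : θ / 2 ≤ Real.sin θ := by
    have hcube := Real.sin_gt_sub_cube hθ
    have hθ2 : θ ^ 2 ≤ 1 / 4 := by nlinarith
    nlinarith [mul_le_mul_of_nonneg_left hθ2 hθ.le]
  set a := μ₀ - 1 + z * Real.cos θ with ha
  set b := z * Real.sin θ with hb
  have hzc : 0 ≤ z * Real.cos θ := mul_nonneg hz hcos
  have ha1 : 1 ≤ a := by
    have h2 : 2 ≤ μ₀ := by rw [hμ₀]; linarith
    simp only [ha]; linarith
  have has : 11 / 10 * s ≤ a := by
    have : μ₀ = 11 * (1 + s) / 10 := by rw [hμ₀, hlam0]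
    simp only [ha, this]; linarith
  have hb0 : 0 ≤ b := mul_nonneg hz hsin0
  have hden : 0 < a ^ 2 + b ^ 2 := by nlinarith
  have him : (((μ₀ : ℂ) + (z : ℂ) * Complex.exp (Complex.I * (θ : ℂ))) * (σ₁ : ℂ) /
        (((μ₀ : ℂ) + (z : ℂ) * Complex.exp (Complex.I * (θ : ℂ))) - 1)
        + ((μ₀ : ℂ) + (z : ℂ) * Complex.exp (Complex.I * (θ : ℂ))) * (σ₂ : ℂ)).im
      = b * σ₂ - σ₁ * b / (a ^ 2 + b ^ 2) := by
    have hI : Complex.I * (θ : ℂ) = (θ : ℂ) * Complex.I := mul_comm _ _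
    rw [hI, Complex.exp_mul_I]
    simp only [ha, hb]
    simp only [Complex.add_im, Complex.div_im, Complex.normSq_apply, Complex.mul_im,
      Complex.mul_re, Complex.sub_re, Complex.sub_im, Complex.add_re, Complex.ofReal_re,
      Complex.ofReal_im, Complex.cos_ofReal_re, Complex.cos_ofReal_im, Complex.sin_ofReal_re,
      Complex.sin_ofReal_im, Complex.I_re, Complex.I_im, Complex.one_re, Complex.one_im]
    ring_nf
  simp only [him]
  have hfrac : σ₁ * b / (a ^ 2 + b ^ 2) ≤ 100 / 121 * σ₂ * b := by
    rw [div_le_iff₀ hden]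
    have hA : s ^ 2 ≤ 100 / 121 * a ^ 2 := by
      have h11 := mul_self_le_mul_self (by positivity : (0:ℝ) ≤ 11 / 10 * s) has
      nlinarith [h11]
    calc σ₁ * b = σ₂ * b * s ^ 2 := by rw [hσ₁eq]; ring
      _ ≤ σ₂ * b * (100 / 121 * a ^ 2) :=
          mul_le_mul_of_nonneg_left hA (mul_nonneg hσ₂.le hb0)
      _ ≤ 100 / 121 * σ₂ * b * (a ^ 2 + b ^ 2) := by
          nlinarith [mul_nonneg (mul_nonneg hσ₂.le hb0) (sq_nonneg b)]
  have hbθ : z * θ / 2 ≤ b := by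
    simp only [hb]
    nlinarith [mul_le_mul_of_nonneg_left hsin hz]
  nlinarith [hfrac, mul_le_mul_of_nonneg_left hbθ hσ₂.le]
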